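/- Let f ∈ L¹(ℝ, ℂ) satisfy ∫_ℝ e^{iyt} f(t) dt = 0 for every real y ≥ 0. Then for every a ≥ 0 and every b ≤ 0 one has ∫_ℝ e^{i(at + b/t)} f(t) dt = 0. -/

import Mathlib

open MeasureTheory Real

section AuxStmt5
open Set Complex

lemma lap_int_real (n : ℕ) {r : ℝ} (hr : 0 < r) :
    IntegrableOn (fun y : ℝ => y ^ n * Real.exp (-(r * y))) (Ioi 0) := by
  have h := integrableOn_rpow_mul_exp_neg_mul_rpow (p := 1) (s := n)
    (by exact_mod_cast neg_one_lt_zero.trans_le (Nat.cast_nonneg n)) zero_lt_one hr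
  refine h.congr_fun (fun y hy => ?_) measurableSet_Ioi
  rw [mem_Ioi] at hy
  beta_reduce
  rw [Real.rpow_natCast, Real.rpow_one]
  ring_nf

lemma lap_int (n : ℕ) {s : ℂ} (hs : 0 < s.re) :
    IntegrableOn (fun y : ℝ => (y : ℂ) ^ n * Complex.exp (-(s * y))) (Ioi 0) := by
  refine Integrable.mono' (lap_int_real n hs) ?_ ?_
  · exact (Continuous.mul (by continuity) (by continuity)).aestronglyMeasurable
  · filter_upwards [ae_restrict_mem measurableSet_Ioi] with y hy
    rw [mem_Ioi] at hy
    rw [norm_mul, Complex.norm_exp, norm_pow, Complex.norm_real, Real.norm_of_nonneg hy.le,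
      Complex.neg_re, Complex.mul_re, Complex.ofReal_re, Complex.ofReal_im, mul_zero, sub_zero]

lemma lap_tendsto (k : ℕ) {s : ℂ} (hs : 0 < s.re) :
    Filter.Tendsto (fun y : ℝ => (y : ℂ) ^ k * Complex.exp (-(s * y)))
      Filter.atTop (nhds 0) := by
  rw [tendsto_zero_iff_norm_tendsto_zero]
  have h := tendsto_rpow_mul_exp_neg_mul_atTop_nhds_zero k s.re hs
  refine h.congr' ?_
  filter_upwards [Filter.eventually_ge_atTop (0:ℝ)] with y hy
  rw [Real.rpow_natCast, norm_mul, Complex.norm_exp,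
    norm_pow, Complex.norm_real, Real.norm_of_nonneg hy,
    Complex.neg_re, Complex.mul_re, Complex.ofReal_re, Complex.ofReal_im, mul_zero, sub_zero,
    neg_mul]

lemma cexp_deriv {s : ℂ} (y : ℝ) :
    HasDerivAt (fun y : ℝ => Complex.exp (-(s * y))) (-s * Complex.exp (-(s * y))) y := by
  have h1 : HasDerivAt (fun z : ℂ => Complex.exp (-(s * z))) (-s * Complex.exp (-(s * y))) y := by
    simpa [mul_comm] using (((hasDerivAt_id (y : ℂ)).const_mul s).neg).cexp
  exact h1.comp_ofReal

lemma laplace (n : ℕ) {s : ℂ} (hs : 0 < s.re) :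
    ∫ y in Ioi (0:ℝ), (y : ℂ) ^ n * Complex.exp (-(s * y)) = (Nat.factorial n : ℂ) / s ^ (n + 1) := by
  have hs0 : s ≠ 0 := fun h => by simp [h] at hs
  induction n with
  | zero =>
    have hderiv : ∀ y : ℝ, y ∈ Ici (0:ℝ) → HasDerivAt
        (fun y : ℝ => -s⁻¹ * Complex.exp (-(s * y))) (Complex.exp (-(s * y))) y := by
      intro y _
      have := (cexp_deriv (s := s) y).const_mul (-s⁻¹)
      exact this.congr_deriv (by rw [← mul_assoc, neg_mul_neg, inv_mul_cancel₀ hs0, one_mul])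
    have := integral_Ioi_of_hasDerivAt_of_tendsto' hderiv
      ((lap_int 0 hs).congr_fun (fun y _ => by simp) measurableSet_Ioi)
      (by simpa using (lap_tendsto 0 hs).const_mul (-s⁻¹))
    simp only [Complex.ofReal_zero, mul_zero, neg_zero, Complex.exp_zero, mul_one, zero_sub,
      neg_neg] at this
    simp [this, Nat.factorial]
  | succ n ih =>
    have hderiv : ∀ y : ℝ, y ∈ Ici (0:ℝ) → HasDerivAt
        (fun y : ℝ => (y : ℂ) ^ (n + 1) * Complex.exp (-(s * y)))
        (((n + 1 : ℂ) * (y:ℂ) ^ n - s * (y:ℂ) ^ (n+1)) * Complex.exp (-(s * y))) y := by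
      intro y _
      have h1 : HasDerivAt (fun y : ℝ => (y : ℂ) ^ (n + 1)) ((n + 1 : ℂ) * (y:ℂ) ^ n) y := by
        simpa using (hasDerivAt_pow (n+1) (y:ℂ)).comp_ofReal
      have := h1.mul (cexp_deriv (s := s) y)
      exact this.congr_deriv (by ring)
    have hint : IntegrableOn (fun y : ℝ =>
        ((n + 1 : ℂ) * (y:ℂ) ^ n - s * (y:ℂ) ^ (n+1)) * Complex.exp (-(s * y))) (Ioi 0) := by
      have := ((lap_int n hs).const_mul (n+1:ℂ)).sub ((lap_int (n+1) hs).const_mul s)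
      exact IntegrableOn.congr_fun this
        (fun y _ => by simp only [Pi.sub_apply]; ring) measurableSet_Ioi
    have key := integral_Ioi_of_hasDerivAt_of_tendsto' hderiv hint (lap_tendsto (n+1) hs)
    simp only [Complex.ofReal_zero, zero_pow (Nat.succ_ne_zero n), zero_mul, sub_zero,
      mul_zero, neg_zero, Complex.exp_zero, mul_one, sub_zero] at key
    have expand : ∫ y in Ioi (0:ℝ),
        ((n + 1 : ℂ) * (y:ℂ) ^ n - s * (y:ℂ) ^ (n+1)) * Complex.exp (-(s * y))
        = (n+1:ℂ) * (∫ y in Ioi (0:ℝ), (y : ℂ) ^ n * Complex.exp (-(s * y)))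
          - s * ∫ y in Ioi (0:ℝ), (y : ℂ) ^ (n+1) * Complex.exp (-(s * y)) := by
      rw [← integral_const_mul, ← integral_const_mul, ← integral_sub
        ((lap_int n hs).const_mul _) ((lap_int (n+1) hs).const_mul _)]
      congr 1; ext y; ring
    rw [expand, ih, sub_eq_zero] at key
    have hI : (∫ y in Ioi (0:ℝ), (y : ℂ) ^ (n+1) * Complex.exp (-(s * y)))
        = (n+1:ℂ) * ((Nat.factorial n : ℂ) / s ^ (n + 1)) / s := by
      rw [eq_div_iff hs0, mul_comm]
      exact key.symm
    rw [hI, Nat.factorial_succ]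
    push_cast
    rw [mul_div_assoc', div_div, ← pow_succ]

lemma lemA (f : ℝ → ℂ) (hf : Integrable f)
    (h : ∀ y : ℝ, 0 ≤ y → ∫ t : ℝ, Complex.exp (Complex.I * y * t) * f t = 0)
    (a : ℝ) (ha : 0 ≤ a) {ε : ℝ} (hε : 0 < ε) (n : ℕ) :
    ∫ t : ℝ, Complex.exp (Complex.I * a * t) * ((t : ℂ) + Complex.I * ε)⁻¹ ^ n * f t = 0 := by
  induction n with
  | zero => simpa using h a ha
  | succ n _ =>
    set G : ℝ → ℝ → ℂ := fun t y =>
      ((y : ℂ) ^ n * Complex.exp (-(((ε : ℂ) - Complex.I * t) * y))) *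
        (Complex.exp (Complex.I * a * t) * f t) with hG
    have hre : ∀ t : ℝ, 0 < ((ε : ℂ) - Complex.I * t).re := by
      intro t; simp [Complex.sub_re, Complex.mul_re, hε]
    -- integrability on the product
    have hGint : Integrable (Function.uncurry G)
        (volume.prod (volume.restrict (Ioi 0))) := by
      have hbound : Integrable (fun z : ℝ × ℝ => ‖f z.1‖ * (z.2 ^ n * Real.exp (-(ε * z.2))))
          (volume.prod (volume.restrict (Ioi 0))) :=
        hf.norm.mul_prod (lap_int_real n hε)
      refine hbound.mono' ?_ ?_
      · apply AEStronglyMeasurable.mul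
        · exact (Continuous.aestronglyMeasurable (by continuity))
        · apply AEStronglyMeasurable.mul
          · exact (Continuous.aestronglyMeasurable (by continuity))
          · exact hf.1.comp_quasiMeasurePreserving Measure.quasiMeasurePreserving_fst
      · have hy : ∀ᵐ z : ℝ × ℝ ∂(volume.prod (volume.restrict (Ioi 0))), z.2 ∈ Ioi (0:ℝ) :=
          Measure.quasiMeasurePreserving_snd.tendsto_ae.eventually
            (ae_restrict_mem measurableSet_Ioi)
        filter_upwards [hy] with z hz
        rw [mem_Ioi] at hz
        rw [Function.uncurry]
        simp only [hG]
        rw [norm_mul, norm_mul, norm_mul, Complex.norm_exp,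
          Complex.norm_exp, norm_pow,
          Complex.norm_real, Real.norm_of_nonneg hz.le]
        have h1 : (-(((ε : ℂ) - Complex.I * z.1) * z.2)).re = -(ε * z.2) := by
          simp [Complex.sub_re, Complex.mul_re, Complex.mul_im]
          try ring
        have h2 : (Complex.I * (a:ℂ) * (z.1:ℂ)).re = 0 := by
          simp [Complex.mul_re, Complex.mul_im]
        rw [h1, h2, Real.exp_zero, one_mul]
        exact le_of_eq (mul_comm _ _)
    have hswap := integral_integral_swap hGint
    have hzero : (∫ y in Ioi (0:ℝ), ∫ t : ℝ, G t y) = 0 := by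
      rw [setIntegral_congr_fun measurableSet_Ioi (g := fun _ => (0:ℂ)) ?_, integral_zero]
      intro y hy
      rw [mem_Ioi] at hy
      have heq : ∀ t : ℝ, G t y =
          ((y : ℂ) ^ n * Complex.exp (-((ε:ℂ) * y))) *
            (Complex.exp (Complex.I * ((a + y : ℝ) : ℂ) * t) * f t) := by
        intro t
        have he : Complex.exp (-(((ε : ℂ) - Complex.I * t) * y)) *
            Complex.exp (Complex.I * a * t) =
            Complex.exp (-((ε:ℂ) * y)) * Complex.exp (Complex.I * ((a + y : ℝ) : ℂ) * t) := by
          rw [← Complex.exp_add, ← Complex.exp_add]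
          congr 1
          push_cast
          ring
        simp only [hG]
        linear_combination ((y:ℂ) ^ n * f t) * he
      show (∫ t : ℝ, G t y) = 0
      rw [integral_congr_ae (Filter.Eventually.of_forall heq), integral_const_mul,
        h (a + y) (by positivity), mul_zero]
    have hleft : (∫ t : ℝ, ∫ y in Ioi (0:ℝ), G t y) =
        ∫ t : ℝ, ((Nat.factorial n : ℂ) / ((ε:ℂ) - Complex.I * t) ^ (n + 1)) *
          (Complex.exp (Complex.I * a * t) * f t) := by
      refine integral_congr_ae (Filter.Eventually.of_forall fun t => ?_)
      simp only [hG]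
      rw [integral_mul_const, laplace n (hre t)]
    have key : (∫ t : ℝ, ((Nat.factorial n : ℂ) / ((ε:ℂ) - Complex.I * t) ^ (n + 1)) *
        (Complex.exp (Complex.I * a * t) * f t)) = 0 := by
      rw [← hleft]
      exact hswap.trans hzero
    have hfact : ∀ t : ℝ, Complex.exp (Complex.I * a * t) *
        ((t : ℂ) + Complex.I * ε)⁻¹ ^ (n + 1) * f t =
        ((-Complex.I) ^ (n + 1) / (Nat.factorial n : ℂ)) *
          (((Nat.factorial n : ℂ) / ((ε:ℂ) - Complex.I * t) ^ (n + 1)) *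
            (Complex.exp (Complex.I * a * t) * f t)) := by
      intro t
      have hne : (ε:ℂ) - Complex.I * t ≠ 0 := by
        intro hcon
        have h2 := hre t
        rw [hcon] at h2
        simp at h2
      have hid : ((t:ℂ) + Complex.I * ε)⁻¹ = -Complex.I * ((ε:ℂ) - Complex.I * t)⁻¹ := by
        have hid0 : ((t:ℂ) + Complex.I * ε) = Complex.I * ((ε:ℂ) - Complex.I * t) := by
          linear_combination (t:ℂ) * Complex.I_sq
        rw [hid0, mul_inv, Complex.inv_I]
      rw [hid, mul_pow]
      have hfac : (Nat.factorial n : ℂ) ≠ 0 := by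
        exact_mod_cast (Nat.factorial_ne_zero n)
      have hnep : ((ε:ℂ) - Complex.I * t) ^ (n+1) ≠ 0 := pow_ne_zero _ hne
      rw [div_eq_mul_inv (Nat.factorial n : ℂ), ← inv_pow]
      linear_combination (-((-Complex.I)^(n+1) * (((ε:ℂ) - Complex.I*t)⁻¹)^(n+1) *
        Complex.exp (Complex.I * a * t) * f t)) * mul_inv_cancel₀ hfac
    rw [integral_congr_ae (Filter.Eventually.of_forall hfact), integral_const_mul, key, mul_zero]

lemma lemB (f : ℝ → ℂ) (hf : Integrable f)
    (h : ∀ y : ℝ, 0 ≤ y → ∫ t : ℝ, Complex.exp (Complex.I * y * t) * f t = 0)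
    (a b : ℝ) (ha : 0 ≤ a) {ε : ℝ} (hε : 0 < ε) :
    ∫ t : ℝ, Complex.exp (Complex.I * b * ((t : ℂ) + Complex.I * ε)⁻¹) *
      (Complex.exp (Complex.I * a * t) * f t) = 0 := by
  set w : ℝ → ℂ := fun t => ((t : ℂ) + Complex.I * ε)⁻¹ with hw
  have hne : ∀ t : ℝ, (t : ℂ) + Complex.I * ε ≠ 0 := by
    intro t hcon
    have : ((t : ℂ) + Complex.I * ε).im = 0 := by rw [hcon]; simp
    simp [Complex.add_im, Complex.mul_im] at this
    exact hε.ne' this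
  have hwc : Continuous w := by
    refine Continuous.inv₀ (by continuity) hne
  have hwb : ∀ t : ℝ, ‖w t‖ ≤ ε⁻¹ := by
    intro t
    rw [hw]
    rw [norm_inv]
    refine inv_anti₀ hε ?_
    calc ε = |((t:ℂ) + Complex.I * ε).im| := by
            simp [Complex.add_im, Complex.mul_im, abs_of_pos hε]
      _ ≤ ‖(t:ℂ) + Complex.I * ε‖ := Complex.abs_im_le_norm _
      _ = ‖(t:ℂ) + Complex.I * ε‖ := rfl
  set F : ℕ → ℝ → ℂ := fun n t =>
    ((Complex.I * b * w t) ^ n / (Nat.factorial n : ℂ)) *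
      (Complex.exp (Complex.I * a * t) * f t) with hF
  have hFm : ∀ n, AEStronglyMeasurable (F n) volume := by
    intro n
    apply AEStronglyMeasurable.mul
    · exact Continuous.aestronglyMeasurable (by fun_prop)
    · exact (Continuous.aestronglyMeasurable (by continuity)).mul hf.1
  have hcbound : ∀ n t, ‖(Complex.I * b * w t) ^ n / (Nat.factorial n : ℂ) *
      Complex.exp (Complex.I * a * t)‖ ≤ (|b| * ε⁻¹) ^ n / (Nat.factorial n) := by
    intro n t
    rw [norm_mul, norm_div, norm_pow]
    have h2 : (Complex.I * (a:ℂ) * (t:ℂ)).re = 0 := by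
      simp [Complex.mul_re, Complex.mul_im]
    rw [Complex.norm_exp, h2, Real.exp_zero, mul_one]
    have hnorm : ‖Complex.I * (b:ℂ) * w t‖ ≤ |b| * ε⁻¹ := by
      rw [norm_mul, norm_mul]
      simp only [Complex.norm_I, one_mul, Complex.norm_real, Real.norm_eq_abs]
      exact mul_le_mul_of_nonneg_left (hwb t) (abs_nonneg b)
    have hd : ‖((Nat.factorial n : ℕ) : ℂ)‖ = ((Nat.factorial n : ℕ) : ℝ) := by
      simp
    rw [hd]
    gcongr <;> first | exact hnorm | positivity
  have hFint : ∀ n, Integrable (F n) := by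
    intro n
    have hcont : Continuous (fun t : ℝ => (Complex.I * b * w t) ^ n /
        (Nat.factorial n : ℂ) * Complex.exp (Complex.I * a * t)) := by fun_prop
    have := hf.bdd_mul hcont.aestronglyMeasurable
      (c := (|b| * ε⁻¹) ^ n / (Nat.factorial n)) (Filter.Eventually.of_forall fun t => hcbound n t)
    refine this.congr (Filter.Eventually.of_forall fun t => ?_)
    rw [hF]; ring
  have hFsum : Summable fun n => ∫ t : ℝ, ‖F n t‖ := by
    refine Summable.of_nonneg_of_le (fun n => integral_nonneg fun t => norm_nonneg _)
      (fun n => ?_)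
      (((Real.summable_pow_div_factorial (|b| * ε⁻¹)).mul_right (∫ t : ℝ, ‖f t‖)))
    have : ∀ t : ℝ, ‖F n t‖ ≤ ((|b| * ε⁻¹) ^ n / (Nat.factorial n)) * ‖f t‖ := by
      intro t
      rw [hF]
      calc ‖(Complex.I * ↑b * w t) ^ n / (Nat.factorial n : ℂ) *
            (Complex.exp (Complex.I * ↑a * ↑t) * f t)‖
          = ‖(Complex.I * ↑b * w t) ^ n / (Nat.factorial n : ℂ) *
            Complex.exp (Complex.I * ↑a * ↑t)‖ * ‖f t‖ := by rw [← norm_mul]; ring_nf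
        _ ≤ ((|b| * ε⁻¹) ^ n / (Nat.factorial n)) * ‖f t‖ :=
            mul_le_mul_of_nonneg_right (hcbound n t) (norm_nonneg _)
    calc (∫ t : ℝ, ‖F n t‖) ≤ ∫ t : ℝ, ((|b| * ε⁻¹) ^ n / (Nat.factorial n)) * ‖f t‖ :=
          integral_mono (hFint n).norm (hf.norm.const_mul _) this
      _ = (|b| * ε⁻¹) ^ n / (Nat.factorial n) * ∫ t : ℝ, ‖f t‖ := integral_const_mul _ _
  have htsum : ∀ t : ℝ, (∑' n, F n t) =
      Complex.exp (Complex.I * b * w t) * (Complex.exp (Complex.I * a * t) * f t) := by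
    intro t
    rw [hF]
    rw [tsum_mul_right]
    congr 1
    rw [Complex.exp_eq_exp_ℂ, NormedSpace.exp_eq_tsum_div]
  have hzero : ∀ n, (∫ t : ℝ, F n t) = 0 := by
    intro n
    have : ∀ t : ℝ, F n t = ((Complex.I * b) ^ n / (Nat.factorial n : ℂ)) *
        (Complex.exp (Complex.I * a * t) * ((t : ℂ) + Complex.I * ε)⁻¹ ^ n * f t) := by
      intro t
      rw [hF, hw, mul_pow]
      ring
    rw [integral_congr_ae (Filter.Eventually.of_forall this), integral_const_mul,
      lemA f hf h a ha hε n, mul_zero]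
  have hs := hasSum_integral_of_summable_integral_norm hFint hFsum
  have hs0 : HasSum (fun n => ∫ t : ℝ, F n t) 0 := by
    have : (fun n => ∫ t : ℝ, F n t) = fun _ => (0:ℂ) := funext hzero
    rw [this]
    exact hasSum_zero
  have := hs0.unique hs
  rw [← integral_congr_ae (Filter.Eventually.of_forall htsum), ← this]

end AuxStmt5

/-- If `f ∈ H¹₊(ℝ)` (all nonnegative Fourier frequencies of `f` vanish), then
the integrals against `e^{i(at + b/t)}` vanish for all `a ≥ 0`, `b ≤ 0`. -/
theorem stmt_5 (f : ℝ → ℂ) (hf : Integrable f)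
    (h : ∀ y : ℝ, 0 ≤ y → ∫ t : ℝ, Complex.exp (Complex.I * y * t) * f t = 0)
    (a b : ℝ) (ha : 0 ≤ a) (hb : b ≤ 0) :
    ∫ t : ℝ, Complex.exp (Complex.I * (a * t + b / t)) * f t = 0 := by
  set ε : ℕ → ℝ := fun k => ((k : ℝ) + 1)⁻¹ with hε
  have hεpos : ∀ k, 0 < ε k := fun k => by positivity
  set F : ℕ → ℝ → ℂ := fun k t =>
    Complex.exp (Complex.I * b * ((t : ℂ) + Complex.I * ε k)⁻¹) *
      (Complex.exp (Complex.I * a * t) * f t) with hF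
  have hFzero : ∀ k, (∫ t : ℝ, F k t) = 0 := fun k => lemB f hf h a b ha (hεpos k)
  have hne : ∀ k (t : ℝ), (t : ℂ) + Complex.I * ε k ≠ 0 := by
    intro k t hcon
    have : ((t : ℂ) + Complex.I * ε k).im = 0 := by rw [hcon]; simp
    simp [Complex.add_im, Complex.mul_im] at this
    exact (hεpos k).ne' this
  have hFm : ∀ k, AEStronglyMeasurable (F k) volume := by
    intro k
    apply AEStronglyMeasurable.mul
    · refine Continuous.aestronglyMeasurable ?_
      refine Complex.continuous_exp.comp ?_
      exact (continuous_const.mul ((Complex.continuous_ofReal.add continuous_const).inv₀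
        (hne k)))
    · exact (Continuous.aestronglyMeasurable (by continuity)).mul hf.1
  have hbound : ∀ k, ∀ᵐ t : ℝ, ‖F k t‖ ≤ ‖f t‖ := by
    intro k
    refine Filter.Eventually.of_forall fun t => ?_
    rw [hF]
    have h2 : (Complex.I * (a:ℂ) * (t:ℂ)).re = 0 := by
      simp [Complex.mul_re, Complex.mul_im]
    rw [norm_mul, norm_mul, Complex.norm_exp,
      Complex.norm_exp, h2,
      Real.exp_zero, one_mul]
    have him : (Complex.I * (b:ℂ) * ((t : ℂ) + Complex.I * ε k)⁻¹).re
        = b * (ε k / Complex.normSq ((t : ℂ) + Complex.I * ε k)) := by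
      simp [Complex.inv_re, Complex.inv_im, Complex.mul_re, Complex.mul_im,
        Complex.add_re, Complex.add_im]
      ring
    rw [him]
    have hN : 0 < Complex.normSq ((t : ℂ) + Complex.I * ε k) :=
      Complex.normSq_pos.mpr (hne k t)
    have : b * (ε k / Complex.normSq ((t : ℂ) + Complex.I * ε k)) ≤ 0 :=
      mul_nonpos_of_nonpos_of_nonneg hb (by positivity)
    calc Real.exp (b * (ε k / Complex.normSq ((t : ℂ) + Complex.I * ε k))) * ‖f t‖
        ≤ 1 * ‖f t‖ := by
          gcongr
          exact Real.exp_le_one_iff.mpr this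
      _ = ‖f t‖ := one_mul _
  have hae : ∀ᵐ t : ℝ ∂(volume : Measure ℝ), Filter.Tendsto (fun k => F k t) Filter.atTop
      (nhds (Complex.exp (Complex.I * ((a * t + b / t : ℝ) : ℂ)) * f t)) := by
    have h0 : ∀ᵐ t : ℝ ∂(volume : Measure ℝ), t ≠ 0 := by
      rw [ae_iff]
      simp only [ne_eq, not_not, Set.setOf_eq_eq_singleton]
      exact measure_singleton 0
    filter_upwards [h0] with t ht
    have htc : (t : ℂ) ≠ 0 := Complex.ofReal_ne_zero.mpr ht
    have h1 : Filter.Tendsto (fun k : ℕ => ε k) Filter.atTop (nhds 0) := by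
      simpa [hε, one_div] using tendsto_one_div_add_atTop_nhds_zero_nat (𝕜 := ℝ)
    have h2 : Filter.Tendsto (fun k : ℕ => ((t:ℂ) + Complex.I * (ε k))⁻¹)
        Filter.atTop (nhds ((t:ℂ))⁻¹) := by
      have h2a : Filter.Tendsto (fun k : ℕ => (t:ℂ) + Complex.I * (ε k))
          Filter.atTop (nhds ((t:ℂ) + Complex.I * ((0:ℝ):ℂ))) :=
        tendsto_const_nhds.add (tendsto_const_nhds.mul
          ((Complex.continuous_ofReal.tendsto 0).comp h1))
      have h2b := h2a.inv₀ (by simpa using htc)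
      simpa using h2b
    have h3 : Filter.Tendsto (fun k => F k t) Filter.atTop
        (nhds (Complex.exp (Complex.I * b * ((t:ℂ))⁻¹) *
          (Complex.exp (Complex.I * a * t) * f t))) :=
      ((Complex.continuous_exp.tendsto _).comp (tendsto_const_nhds.mul h2)).mul
        tendsto_const_nhds
    have heq : Complex.exp (Complex.I * ((a * t + b / t : ℝ) : ℂ)) * f t =
        Complex.exp (Complex.I * b * ((t:ℂ))⁻¹) * (Complex.exp (Complex.I * a * t) * f t) := by
      have hsplit : Complex.I * ((a * t + b / t : ℝ) : ℂ) =
          Complex.I * a * t + Complex.I * b * ((t:ℂ))⁻¹ := by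
        push_cast
        field_simp
      rw [hsplit, Complex.exp_add]
      ring
    rw [heq]
    exact h3
  have hDCT := tendsto_integral_of_dominated_convergence (fun t => ‖f t‖) hFm hf.norm
    hbound hae
  have hconst : (fun k => ∫ t : ℝ, F k t) = fun _ => (0:ℂ) := funext hFzero
  rw [hconst] at hDCT
  have hfinal := tendsto_nhds_unique hDCT tendsto_const_nhds
  have hcast : ∀ t : ℝ, Complex.I * ((a:ℂ) * t + (b:ℂ) / t) =
      Complex.I * (((a * t + b / t : ℝ)) : ℂ) := by
    intro t
    push_cast
    ring
  simp_rw [hcast]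
  exact hfinal
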